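/- The set I = {S ∈ K[∂] \ {0} : L = A S⁻¹ for some A ∈ K[∂]} ∪ {0} of denominators of a fixed rational pseudodifferential operator L is a right ideal of K[∂]. -/

import Mathlib

/-- An axiomatization of the ring `R((∂⁻¹))` of pseudodifferential operators over a
commutative differential ring `(R, δ)`: elements are determined by their coefficients
`coeff A : ℤ → R` (supported in a half-line `n ≤ N`), with the product determined by
`∂ⁿ ∘ a = Σ_{j≥0} binom(n,j) δʲ(a) ∂^{n-j}`, equivalently by the symbol formula
`coeff (A∘B) k = Σ_{m+n-j=k} binom(m,j) aₘ δʲ(bₙ)`. -/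
structure PseudoDiffOps (R : Type) [CommRing R] (δ : R → R) : Type 1 where
  carrier : Type
  [ringCarrier : Ring carrier]
  /-- the embedding of `R` as the operators of order `≤ 0` with only a constant term -/
  const : R →+* carrier
  /-- the derivation `∂` as an element of the ring -/
  d : carrier
  /-- the element `∂⁻¹` -/
  dinv : carrier
  δ_add : ∀ a b : R, δ (a + b) = δ a + δ b
  δ_leibniz : ∀ a b : R, δ (a * b) = δ a * b + a * δ b
  /-- `coeff A n` is the coefficient of `∂ⁿ` in `A` -/
  coeff : carrier → ℤ → R
  coeff_injective : Function.Injective coeff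
  coeff_add : ∀ A B n, coeff (A + B) n = coeff A n + coeff B n
  coeff_one : ∀ n, coeff 1 n = if n = 0 then 1 else 0
  coeff_const : ∀ (a : R) (n), coeff (const a) n = if n = 0 then a else 0
  coeff_d : ∀ n, coeff d n = if n = 1 then 1 else 0
  coeff_dinv : ∀ n, coeff dinv n = if n = -1 then 1 else 0
  d_dinv : d * dinv = 1
  dinv_d : dinv * d = 1
  coeff_bddAbove : ∀ A, ∃ N : ℤ, ∀ n, N < n → coeff A n = 0
  exists_of_coeffs : ∀ f : ℤ → R, (∃ N : ℤ, ∀ n, N < n → f n = 0) → ∃ A, coeff A = f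
  coeff_mul : ∀ (A B : carrier) (NA NB k : ℤ),
    (∀ n, NA < n → coeff A n = 0) → (∀ n, NB < n → coeff B n = 0) →
    coeff (A * B) k =
      ∑ m ∈ Finset.Icc (k - NB) NA, ∑ j ∈ Finset.range ((NB - k + m).toNat + 1),
        ((Ring.choose m j : ℤ) : R) * (coeff A m * δ^[j] (coeff B (k + j - m)))

attribute [instance] PseudoDiffOps.ringCarrier

namespace PseudoDiffOps

variable {R : Type} [CommRing R] {δ : R → R} (P : PseudoDiffOps R δ)

/-- the order of a pseudodifferential operator: the largest `n` with `coeff A n ≠ 0`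
(junk value for `A = 0`). -/
noncomputable def ord (A : P.carrier) : ℤ := sSup {n : ℤ | P.coeff A n ≠ 0}

/-- the leading coefficient of a pseudodifferential operator -/
noncomputable def leadCoeff (A : P.carrier) : R := P.coeff A (P.ord A)

/-- `A` is a differential operator, i.e. lies in `R[∂] ⊆ R((∂⁻¹))` -/
def IsDiffOp (A : P.carrier) : Prop := ∀ n : ℤ, n < 0 → P.coeff A n = 0

/-- `A` is monic, i.e. has leading coefficient `1` -/
noncomputable def Monic (A : P.carrier) : Prop := P.leadCoeff A = 1

end PseudoDiffOps

section Aux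

variable {K : Type} [Field K]

/-- Coefficients of the right inverse of a pseudodifferential operator with
coefficients `α` and leading term at `N`: `invCoeff δ α N i` will be the coefficient
of `∂^(-N-i)` in the inverse. -/
noncomputable def invCoeff (δ : K → K) (α : ℤ → K) (N : ℤ) : ℕ → K
  | 0 => (α N)⁻¹
  | (i+1) => (α N)⁻¹ * (0 -
      ∑ s ∈ Finset.range (i+2), ∑ j ∈ Finset.range (i + 2 - s),
        if h : s + j = 0 then 0 else
          ((Ring.choose ((N : ℤ) - s) j : ℤ) : K) *
            (α (N - s) * δ^[j] (invCoeff δ α N (i + 1 - s - j))))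
  decreasing_by omega

theorem invCoeff_key (δ : K → K) (α : ℤ → K) (N : ℤ) (hα : α N ≠ 0) (i : ℕ) :
    (∑ s ∈ Finset.range (i+1), ∑ j ∈ Finset.range (i + 1 - s),
      ((Ring.choose ((N : ℤ) - s) j : ℤ) : K) *
        (α (N - s) * δ^[j] (invCoeff δ α N (i - s - j)))) =
    if i = 0 then 1 else 0 := by
  set t : ℕ → ℕ → K := fun s j =>
    ((Ring.choose ((N : ℤ) - s) j : ℤ) : K) *
      (α (N - s) * δ^[j] (invCoeff δ α N (i - s - j))) with ht
  have hsplit : (∑ s ∈ Finset.range (i+1), ∑ j ∈ Finset.range (i + 1 - s), t s j)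
      = α N * invCoeff δ α N i +
        ∑ s ∈ Finset.range (i+1), ∑ j ∈ Finset.range (i + 1 - s),
          (if s + j = 0 then 0 else t s j) := by
    have step : ∀ s ∈ Finset.range (i+1), ∀ j ∈ Finset.range (i + 1 - s),
        t s j = (if s + j = 0 then t s j else 0) + (if s + j = 0 then 0 else t s j) := by
      intro s _ j _
      by_cases h : s + j = 0 <;> [rw [if_pos h, if_pos h, add_zero]; rw [if_neg h, if_neg h, zero_add]]
    rw [Finset.sum_congr rfl fun s hs => Finset.sum_congr rfl fun j hj => step s hs j hj]
    simp_rw [Finset.sum_add_distrib]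
    congr 1
    have h0 : ∀ s ∈ Finset.range (i+1), s ≠ 0 →
        (∑ j ∈ Finset.range (i + 1 - s), if s + j = 0 then t s j else 0) = 0 := by
      intro s _ hs
      apply Finset.sum_eq_zero
      intro j _
      rw [if_neg (by omega)]
    rw [Finset.sum_eq_single_of_mem 0 (Finset.mem_range.2 (by omega)) h0]
    rw [Finset.sum_eq_single_of_mem 0 (Finset.mem_range.2 (by omega))
      (fun j _ hj => if_neg (by omega))]
    rw [if_pos rfl, ht]
    simp [Ring.choose_zero_right]
  rw [hsplit]
  cases i with
  | zero =>
    rw [invCoeff]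
    simp [mul_inv_cancel₀ hα, t]
  | succ i' =>
    have hb : invCoeff δ α N (i'+1) = (α N)⁻¹ * (0 -
        ∑ s ∈ Finset.range (i'+2), ∑ j ∈ Finset.range (i' + 2 - s),
          if h : s + j = 0 then 0 else
            ((Ring.choose ((N : ℤ) - s) j : ℤ) : K) *
              (α (N - s) * δ^[j] (invCoeff δ α N (i' + 1 - s - j)))) := by
      rw [invCoeff]
    rw [hb, ← mul_assoc, mul_inv_cancel₀ hα, one_mul]
    have hcong : ∀ s ∈ Finset.range (i'+2), ∀ j ∈ Finset.range (i' + 2 - s),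
        (if h : s + j = 0 then (0:K) else
          ((Ring.choose ((N : ℤ) - s) j : ℤ) : K) *
            (α (N - s) * δ^[j] (invCoeff δ α N (i' + 1 - s - j)))) =
        (if s + j = 0 then 0 else t s j) := by
      intro s _ j _
      by_cases h : s + j = 0
      · simp [h]
      · rw [dif_neg h, if_neg h, ht]
    rw [Finset.sum_congr rfl fun s hs => Finset.sum_congr rfl fun j hj => hcong s hs j hj]
    simp

theorem sum_Icc_eq_sum_range {M : Type*} [AddCommMonoid M] (g : ℤ → M) (N : ℤ) (i : ℕ) :
    ∑ m ∈ Finset.Icc (N - (i : ℤ)) N, g m = ∑ s ∈ Finset.range (i+1), g (N - (s : ℤ)) := by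
  apply Finset.sum_bij' (i := fun m _ => (N - m).toNat) (j := fun s _ => N - (s : ℤ))
  · intro m hm
    rw [Finset.mem_Icc] at hm
    rw [Finset.mem_range]
    omega
  · intro s hs
    rw [Finset.mem_range] at hs
    rw [Finset.mem_Icc]
    omega
  · intro m hm
    rw [Finset.mem_Icc] at hm
    omega
  · intro s hs
    rw [Finset.mem_range] at hs
    omega
  · intro m hm
    rw [Finset.mem_Icc] at hm
    congr 1
    omega

end Aux

namespace PseudoDiffOps

section Field

variable {K : Type} [Field K] {δ : K → K} (P : PseudoDiffOps K δ)

theorem coeff_zero' (n : ℤ) : P.coeff 0 n = 0 := by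
  have h := P.coeff_add 0 0 n
  rw [add_zero] at h
  exact (left_eq_add.mp h)

theorem isDiffOp_zero : P.IsDiffOp 0 := fun n _ => P.coeff_zero' n

include P in
theorem delta_zero : δ 0 = 0 := by
  have h := P.δ_add 0 0
  rw [add_zero] at h
  exact (left_eq_add.mp h)

include P in
theorem delta_iter_zero (j : ℕ) : δ^[j] (0 : K) = 0 :=
  Function.iterate_fixed P.delta_zero j

theorem exists_lead {A : P.carrier} (hA : A ≠ 0) :
    ∃ N, P.coeff A N ≠ 0 ∧ ∀ n, N < n → P.coeff A n = 0 := by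
  obtain ⟨M, hM⟩ := P.coeff_bddAbove A
  have hinh : ∃ n, P.coeff A n ≠ 0 := by
    by_contra h
    push_neg at h
    exact hA (P.coeff_injective (funext fun n => by rw [h n, P.coeff_zero']))
  obtain ⟨N, hN, hmax⟩ := Int.exists_greatest_of_bdd (P := fun n => P.coeff A n ≠ 0)
    ⟨M, fun z hz => by by_contra hc; exact hz (hM z (by omega))⟩ hinh
  refine ⟨N, hN, fun n hn => ?_⟩
  by_contra hc
  exact absurd (hmax n hc) (by omega)

theorem exists_right_inverse {A : P.carrier} (hA : A ≠ 0) : ∃ B, A * B = 1 := by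
  obtain ⟨N, hN, hNtop⟩ := P.exists_lead hA
  set α := P.coeff A with hα
  set b := invCoeff δ α N with hbdef
  set f : ℤ → K := fun n => if n ≤ -N then b (-N - n).toNat else 0 with hf
  obtain ⟨B, hB⟩ := P.exists_of_coeffs f ⟨-N, fun n hn => by
    simp only [hf]; rw [if_neg (by omega)]⟩
  refine ⟨B, P.coeff_injective ?_⟩
  funext k
  have hBbd : ∀ n, -N < n → P.coeff B n = 0 := fun n hn => by
    rw [hB]; simp only [hf]; rw [if_neg (by omega)]
  rw [P.coeff_mul A B N (-N) k hNtop hBbd, P.coeff_one]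
  rcases lt_or_ge 0 k with hk | hk
  · rw [Finset.Icc_eq_empty (by omega), Finset.sum_empty, if_neg (by omega)]
  · set i := (-k).toNat with hi
    have hk' : k = -(i : ℤ) := by omega
    have hIcc : k - -N = N - (i : ℤ) := by omega
    rw [hIcc, sum_Icc_eq_sum_range]
    have hcong : ∀ s ∈ Finset.range (i+1),
        (∑ j ∈ Finset.range ((-N - k + (N - (s:ℤ))).toNat + 1),
          ((Ring.choose ((N:ℤ) - s) j : ℤ) : K) *
            (α (N - s) * δ^[j] (P.coeff B (k + j - (N - s))))) =
        ∑ j ∈ Finset.range (i + 1 - s),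
          ((Ring.choose ((N:ℤ) - s) j : ℤ) : K) *
            (α (N - s) * δ^[j] (b (i - s - j))) := by
      intro s hs
      rw [Finset.mem_range] at hs
      have h1 : (-N - k + (N - (s:ℤ))).toNat + 1 = i + 1 - s := by omega
      rw [h1]
      refine Finset.sum_congr rfl fun j hj => ?_
      rw [Finset.mem_range] at hj
      have h2 : P.coeff B (k + j - (N - s)) = b (i - s - j) := by
        rw [hB]
        simp only [hf]
        rw [if_pos (by omega)]
        congr 1
        omega
      rw [h2]
    rw [Finset.sum_congr rfl hcong, invCoeff_key δ α N hN i]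
    by_cases h : i = 0
    · rw [if_pos h, if_pos (by omega)]
    · rw [if_neg h, if_neg (by omega)]

theorem isUnit_of_ne_zero {A : P.carrier} (hA : A ≠ 0) : IsUnit A := by
  obtain ⟨B, hAB⟩ := P.exists_right_inverse hA
  have hB0 : B ≠ 0 := by
    rintro rfl
    rw [mul_zero] at hAB
    exact hA (by rw [← mul_one A, ← hAB, mul_zero])
  obtain ⟨C, hBC⟩ := P.exists_right_inverse hB0
  have hAC : A = C := by
    calc A = A * (B * C) := by rw [hBC, mul_one]
    _ = (A * B) * C := by rw [mul_assoc]
    _ = C := by rw [hAB, one_mul]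
  exact ⟨⟨A, B, hAB, by rw [hAC]; exact hBC⟩, rfl⟩

theorem isDiffOp_mul {A B : P.carrier} (hA : P.IsDiffOp A) (hB : P.IsDiffOp B) :
    P.IsDiffOp (A * B) := by
  intro k hk
  obtain ⟨NA, hNA⟩ := P.coeff_bddAbove A
  obtain ⟨NB, hNB⟩ := P.coeff_bddAbove B
  rw [P.coeff_mul A B (max NA 0) (max NB 0) k (fun n hn => hNA n (by omega))
    (fun n hn => hNB n (by omega))]
  apply Finset.sum_eq_zero
  intro m hm
  apply Finset.sum_eq_zero
  intro j hj
  rcases lt_or_ge m 0 with hm0 | hm0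
  · rw [hA m hm0, zero_mul, mul_zero]
  rcases lt_or_ge (k + j - m) 0 with hc | hc
  · rw [hB _ hc, P.delta_iter_zero j, mul_zero, mul_zero]
  · have hmj : ((m.toNat : ℕ) : ℤ) = m := Int.toNat_of_nonneg hm0
    have hlt : m.toNat < j := by omega
    rw [← hmj, Ring.choose_natCast, Nat.choose_eq_zero_of_lt hlt]
    simp

end Field

end PseudoDiffOps

/-- the set `I = {S ∈ K[∂] \ {0} : L = A S⁻¹ for some A ∈ K[∂]} ∪ {0}`
of denominators of a fixed rational pseudodifferential operator `L` is a right ideal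
of `K[∂]`. -/
theorem denominators_right_ideal {K : Type} [Field K] [CharZero K] {δ : K → K}
    (P : PseudoDiffOps K δ) (L : P.carrier)
    (hL : ∃ A S : P.carrier, P.IsDiffOp A ∧ P.IsDiffOp S ∧ S ≠ 0 ∧
      L = A * Ring.inverse S) :
    let I : Set P.carrier :=
      {S : P.carrier | P.IsDiffOp S ∧ S ≠ 0 ∧
        ∃ A : P.carrier, P.IsDiffOp A ∧ L = A * Ring.inverse S} ∪ {0}
    (∀ x ∈ I, ∀ y ∈ I, x + y ∈ I) ∧
    (∀ x ∈ I, ∀ r : P.carrier, P.IsDiffOp r → x * r ∈ I) := by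
  intro I
  have hmem : ∀ S : P.carrier, S ∈ I ↔ P.IsDiffOp S ∧ P.IsDiffOp (L * S) := by
    intro S
    constructor
    · rintro (⟨hS, hS0, A, hA, hLA⟩ | hS0)
      · refine ⟨hS, ?_⟩
        by_cases hu : IsUnit S
        · have h : L * S = A := by
            rw [hLA, mul_assoc, Ring.inverse_mul_cancel _ hu, mul_one]
          rw [h]; exact hA
        · rw [Ring.inverse_non_unit _ hu, mul_zero] at hLA
          rw [hLA, zero_mul]
          exact P.isDiffOp_zero
      · rw [Set.mem_singleton_iff] at hS0
        subst hS0
        rw [mul_zero]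
        exact ⟨P.isDiffOp_zero, P.isDiffOp_zero⟩
    · rintro ⟨hS, hLS⟩
      by_cases hS0 : S = 0
      · right; exact hS0
      · left
        have hu := P.isUnit_of_ne_zero hS0
        exact ⟨hS, hS0, L * S, hLS, by
          rw [mul_assoc, Ring.mul_inverse_cancel _ hu, mul_one]⟩
  constructor
  · intro x hx y hy
    rw [hmem] at hx hy ⊢
    refine ⟨fun n hn => by rw [P.coeff_add, hx.1 n hn, hy.1 n hn, add_zero], ?_⟩
    rw [mul_add]
    intro n hn
    rw [P.coeff_add, hx.2 n hn, hy.2 n hn, add_zero]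
  · intro x hx r hr
    rw [hmem] at hx ⊢
    exact ⟨P.isDiffOp_mul hx.1 hr, by
      rw [← mul_assoc]; exact P.isDiffOp_mul hx.2 hr⟩
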